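/- Let E be a complex Banach space and let F be a norm-closed linear subspace of the continuous dual of E. Let 0 < r₀ < 1 and let φ be a map from ℂ to the continuous dual of E such that: (i) for every x ∈ E the scalar function z ↦ (φ z) x is differentiable (complex-analytic) on the open unit ball {z : |z| < 1}; (ii) the restriction of φ to the circle {z : |z| = r₀} is continuous with respect to the dual (operator) norm; and (iii) φ z ∈ F for every z with |z| = r₀. Then φ 0 ∈ F. -/

import Mathlib

open Metric

set_option maxHeartbeats 1000000 in
set_option synthInstance.maxHeartbeats 1000000 in
/-- If `φ : ℂ → E*` is pointwise analytic on the open unit disc, norm-continuous on the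
circle of radius `r₀`, and takes values in a norm-closed subspace `F` of the dual on that
circle, then `φ 0 ∈ F`. -/
theorem stmt_0 (E : Type*) [NormedAddCommGroup E] [NormedSpace ℂ E] [CompleteSpace E]
    (F : Submodule ℂ (E →L[ℂ] ℂ)) (hF : IsClosed (F : Set (E →L[ℂ] ℂ)))
    (r₀ : ℝ) (hr₀ : 0 < r₀) (hr₁ : r₀ < 1)
    (φ : ℂ → (E →L[ℂ] ℂ))
    (hanal : ∀ x : E, DifferentiableOn ℂ (fun z => φ z x) (ball (0 : ℂ) 1))
    (hcont : ContinuousOn φ (sphere (0 : ℂ) r₀))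
    (hmem : ∀ z ∈ sphere (0 : ℂ) r₀, φ z ∈ F) :
    φ 0 ∈ F := by
  -- the integrand of the circle integral
  set f : ℂ → (E →L[ℂ] ℂ) := fun z => (z - 0)⁻¹ • φ z with hf
  have hne : ∀ z ∈ sphere (0 : ℂ) r₀, z - 0 ≠ 0 := by
    intro z hz h
    rw [sub_zero] at h
    simp only [mem_sphere_iff_norm, sub_zero, h, norm_zero] at hz
    exact absurd hz (ne_of_lt hr₀)
  -- it is continuous on the circle
  have hfc : ContinuousOn f (sphere (0 : ℂ) r₀) := by
    exact ContinuousOn.smul (f := fun z : ℂ => (z - 0)⁻¹) (ContinuousOn.inv₀ (by fun_prop) hne) hcont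
  have hint : CircleIntegrable f 0 r₀ := hfc.circleIntegrable hr₀.le
  have hintI : IntervalIntegrable
      (fun θ : ℝ => deriv (circleMap 0 r₀) θ • f (circleMap 0 r₀ θ))
      MeasureTheory.volume 0 (2 * Real.pi) := hint.out
  -- membership of the integral in F
  have hFmem : (∮ z in C(0, r₀), f z) ∈ F := by
    -- F is complete as a closed subspace
    haveI : CompleteSpace F := hF.completeSpace_coe
    set g : ℝ → F := fun θ =>
      ⟨deriv (circleMap 0 r₀) θ • f (circleMap 0 r₀ θ), by
        apply F.smul_mem
        apply F.smul_mem
        exact hmem _ (circleMap_mem_sphere _ hr₀.le _)⟩ with hg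
    have hgcont : Continuous g := by
      apply Continuous.subtype_mk
      apply Continuous.fun_smul
      · rw [show deriv (circleMap 0 r₀) = fun θ => circleMap 0 r₀ θ * Complex.I from
          funext fun θ => deriv_circleMap _ _ _]
        fun_prop
      · simp only [hf]
        apply Continuous.fun_smul
        · apply Continuous.inv₀ (by fun_prop)
          intro θ
          exact hne _ (circleMap_mem_sphere _ hr₀.le _)
        · exact hcont.comp_continuous (continuous_circleMap _ _)
            (circleMap_mem_sphere _ hr₀.le)
    have hgint : @IntervalIntegrable _ _ NormedAddCommGroup.toENormedAddCommMonoid.toENormedAddMonoid g MeasureTheory.volume 0 (2 * Real.pi) :=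
      hgcont.intervalIntegrable _ _
    have hcomm := ContinuousLinearMap.intervalIntegral_comp_comm (𝕜 := ℂ) (E := ↥F) F.subtypeL hgint
    rw [circleIntegral]
    have heq : (∫ θ in (0:ℝ)..(2*Real.pi), deriv (circleMap 0 r₀) θ • f (circleMap 0 r₀ θ)) =
        F.subtypeL (∫ θ in (0:ℝ)..(2*Real.pi), g θ) := by
      rw [← hcomm]; rfl
    rw [heq]
    exact (∫ θ in (0:ℝ)..(2*Real.pi), g θ).2
  -- Cauchy formula pointwise
  have h2pi : (2 * (Real.pi : ℂ) * Complex.I) ≠ 0 :=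
    mul_ne_zero (mul_ne_zero two_ne_zero (Complex.ofReal_ne_zero.2 Real.pi_ne_zero))
      Complex.I_ne_zero
  have hkey : φ 0 = (2 * Real.pi * Complex.I : ℂ)⁻¹ • ∮ z in C(0, r₀), f z := by
    ext x
    have hdcc : DiffContOnCl ℂ (fun z => φ z x) (ball (0:ℂ) r₀) := by
      apply DifferentiableOn.diffContOnCl
      rw [closure_ball (0:ℂ) hr₀.ne']
      exact (hanal x).mono (closedBall_subset_ball hr₁)
    have hcauchy := hdcc.circleIntegral_sub_inv_smul (w := 0) (by simpa using hr₀)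
    have happly : (∮ z in C(0, r₀), f z) x = ∮ z in C(0, r₀), (z - 0)⁻¹ • φ z x := by
      rw [circleIntegral, circleIntegral,
        ContinuousLinearMap.intervalIntegral_apply hintI x]
      rfl
    rw [ContinuousLinearMap.smul_apply, happly, hcauchy, inv_smul_smul₀ h2pi]
  rw [hkey]
  exact F.smul_mem _ hFmem
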